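/- Let β_k → β > 0 and α_k → α > 0 be positive sequences, with approximants ξ_{k,n} and tails ξ_k of the associated continued fractions (all positive). Then there exist 0 < r < 1 and k₂ such that for all n > k ≥ k₂: if n − k + 1 is even then (ξ_{k,n} − ξ_k)/(ξ_{k+1} − ξ_{k+1,n}) < r, and if n − k + 1 is odd then (ξ_{k,n} − ξ_k)/(ξ_{k+2,n} − ξ_{k+2}) < r². -/

import Mathlib

open Filter

/-- For positive sequences `β k → β > 0`, `α k → α > 0`, with approximants
`ξ k n` and positive tails `ξt k` (converging to the fixed point `ξ > 0`), there exist
`0 < r < 1` and `k₂` such that for all `n > k ≥ k₂`: if `n − k + 1` is even then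
`(ξ k n − ξt k)/(ξt (k+1) − ξ (k+1) n) < r`, and if `n − k + 1` is odd then
`(ξ k n − ξt k)/(ξ (k+2) n − ξt (k+2)) < r²`. -/
theorem stmt9 (α β : ℕ → ℝ) (hαpos : ∀ k, 0 < α k) (hβpos : ∀ k, 0 < β k)
    (α' β' : ℝ) (hα' : 0 < α') (hβ' : 0 < β')
    (hαlim : Tendsto α atTop (nhds α')) (hβlim : Tendsto β atTop (nhds β'))
    (ξ : ℕ → ℕ → ℝ)
    (hdiag : ∀ n, ξ n n = β n / α n)
    (hrec : ∀ k n, k < n → ξ k n = β k / (α k + ξ (k+1) n))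
    (ξt : ℕ → ℝ) (hξtpos : ∀ k, 0 < ξt k)
    (hξtlim : ∀ k, Tendsto (fun n => ξ k n) atTop (nhds (ξt k)))
    (hξtrec : ∀ k, ξt k = β k / (α k + ξt (k+1)))
    (hfix : Tendsto ξt atTop (nhds (α' / 2 * (Real.sqrt (1 + 4 * β' / α' ^ 2) - 1)))) :
    ∃ r : ℝ, 0 < r ∧ r < 1 ∧ ∃ k₂ : ℕ, ∀ k n : ℕ, k₂ ≤ k → k < n →
      ((Even (n - k + 1) → (ξ k n - ξt k) / (ξt (k+1) - ξ (k+1) n) < r) ∧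
       (Odd (n - k + 1) → (ξ k n - ξt k) / (ξ (k+2) n - ξt (k+2)) < r ^ 2)) := by
  set L : ℝ := α' / 2 * (Real.sqrt (1 + 4 * β' / α' ^ 2) - 1) with hLdef
  clear_value L
  -- positivity of approximants
  have hpos : ∀ d k n : ℕ, n = k + d → 0 < ξ k n := by
    intro d
    induction d with
    | zero =>
      intro k n h
      have : n = k := by omega
      subst this
      rw [hdiag]
      exact div_pos (hβpos n) (hαpos n)
    | succ d ih =>
      intro k n h
      have hk : k < n := by omega
      have h1 : 0 < ξ (k+1) n := ih (k+1) n (by omega)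
      rw [hrec k n hk]
      exact div_pos (hβpos k) (by linarith [hαpos k])
  -- key identity
  have key : ∀ k n, k < n →
      ξ k n - ξt k = (ξ k n * ξt k / β k) * (ξt (k+1) - ξ (k+1) n) := by
    intro k n hk
    have hA : 0 < α k + ξ (k+1) n :=
      add_pos (hαpos k) (hpos (n - (k+1)) (k+1) n (by omega))
    have hB : 0 < α k + ξt (k+1) := add_pos (hαpos k) (hξtpos (k+1))
    rw [hrec k n hk, hξtrec k]
    field_simp [hA.ne', hB.ne', (hβpos k).ne']
    ring
  -- alternating property
  have halt : ∀ d k n : ℕ, n = k + d →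
      (Even d → ξt k < ξ k n) ∧ (Odd d → ξ k n < ξt k) := by
    intro d
    induction d with
    | zero =>
      intro k n h
      have : n = k := by omega
      subst this
      constructor
      · intro _
        rw [hξtrec n, hdiag n]
        exact div_lt_div_of_pos_left (hβpos n) (hαpos n)
          (by linarith [hξtpos (n+1)])
      · intro h
        exact absurd h (by decide)
    | succ d ih =>
      intro k n h
      have hk : k < n := by omega
      have hkey := key k n hk
      have hfac : 0 < ξ k n * ξt k / β k :=
        div_pos (mul_pos (hpos (n - k) k n (by omega)) (hξtpos k)) (hβpos k)
      have hih := ih (k+1) n (by omega)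
      constructor
      · intro he
        have hd : Odd d := by
          rw [Nat.even_add_one] at he
          exact Nat.not_even_iff_odd.mp he
        have h1 : ξ (k+1) n < ξt (k+1) := hih.2 hd
        nlinarith
      · intro ho
        have hd : Even d := by
          rw [Nat.odd_add_one] at ho
          exact Nat.not_odd_iff_even.mp ho
        have h1 : ξt (k+1) < ξ (k+1) n := hih.1 hd
        nlinarith
  -- the limit L satisfies L (α' + L) = β', hence 0 < L and L^2 < β'
  have hL0 : 0 ≤ L := ge_of_tendsto' hfix (fun k => (hξtpos k).le)
  have hαL : 0 < α' + L := by linarith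
  have hfixeq : L = β' / (α' + L) := by
    have h1 : Tendsto (fun k => ξt (k+1)) atTop (nhds L) :=
      hfix.comp (tendsto_add_atTop_nat 1)
    have h2 : Tendsto (fun k => β k / (α k + ξt (k+1))) atTop
        (nhds (β' / (α' + L))) := hβlim.div (hαlim.add h1) (ne_of_gt hαL)
    have h3 : (fun k => β k / (α k + ξt (k+1))) = ξt := by
      funext k; exact (hξtrec k).symm
    rw [h3] at h2
    exact tendsto_nhds_unique hfix h2
  have hLβ : L * (α' + L) = β' := by
    rw [eq_div_iff (ne_of_gt hαL)] at hfixeq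
    linarith [hfixeq]
  have hLpos : 0 < L := by
    rw [hfixeq]; exact div_pos hβ' hαL
  have hL2 : L ^ 2 < β' := by nlinarith
  -- choose r
  set q : ℝ := L ^ 2 / β' with hqdef
  have hq0 : 0 < q := div_pos (by positivity) hβ'
  have hq1 : q < 1 := (div_lt_one hβ').mpr hL2
  refine ⟨(q + 1) / 2, by linarith, by linarith, ?_⟩
  set r : ℝ := (q + 1) / 2 with hrdef
  have hqr : q < r := by rw [hrdef]; linarith
  -- eventual bound on ξt k ^ 2 / β k
  have hg : Tendsto (fun k => ξt k ^ 2 / β k) atTop (nhds q) := by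
    rw [hqdef]
    exact (hfix.pow 2).div hβlim (ne_of_gt hβ')
  have hev : ∀ᶠ k in atTop, ξt k ^ 2 / β k < r :=
    hg.eventually_lt_const hqr
  obtain ⟨k₂, hk₂⟩ := eventually_atTop.mp hev
  refine ⟨k₂, ?_⟩
  intro k n hkk hk
  have hrpos : 0 < r := by rw [hrdef]; linarith
  constructor
  · -- even case : n - k + 1 even, so n - k odd
    intro he
    have hodd : Odd (n - k) := by
      rw [Nat.even_iff] at he
      rw [Nat.odd_iff]
      omega
    have hlt : ξ k n < ξt k := (halt (n - k) k n (by omega)).2 hodd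
    have heven1 : Even (n - (k+1)) := by
      rw [Nat.odd_iff] at hodd
      rw [Nat.even_iff]
      omega
    have hkn1 : k + 1 ≤ n := by omega
    have hgt : ξt (k+1) < ξ (k+1) n := (halt (n - (k+1)) (k+1) n (by omega)).1 heven1
    have hD : ξt (k+1) - ξ (k+1) n ≠ 0 := by linarith
    rw [key k n hk, mul_div_assoc, div_self hD, mul_one]
    have h1 : ξ k n * ξt k < ξt k ^ 2 := by nlinarith [hξtpos k]
    have h2 : ξ k n * ξt k / β k < ξt k ^ 2 / β k :=
      (div_lt_div_iff_of_pos_right (hβpos k)).mpr h1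
    exact lt_trans h2 (hk₂ k hkk)
  · -- odd case : n - k + 1 odd, so n - k even and ≥ 2
    intro ho
    have heven : Even (n - k) := by
      rw [Nat.odd_iff] at ho
      rw [Nat.even_iff]
      omega
    have hnk2 : k + 2 ≤ n := by
      rw [Nat.even_iff] at heven
      omega
    have hk1 : k + 1 < n := by omega
    have hodd1 : Odd (n - (k+1)) := by
      rw [Nat.even_iff] at heven
      rw [Nat.odd_iff]
      omega
    have heven2 : Even (n - (k+2)) := by
      rw [Nat.even_iff] at heven ⊢
      omega
    have hlt1 : ξ (k+1) n < ξt (k+1) := (halt (n - (k+1)) (k+1) n (by omega)).2 hodd1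
    have hgt2 : ξt (k+2) < ξ (k+2) n := (halt (n - (k+2)) (k+2) n (by omega)).1 heven2
    have hE : 0 < ξ (k+2) n - ξt (k+2) := by linarith
    have hkey1 := key k n hk
    have hkey2 := key (k+1) n hk1
    have hnum : ξ k n - ξt k =
        ((ξ k n * ξt k / β k) * (ξ (k+1) n * ξt (k+1) / β (k+1))) *
          (ξ (k+2) n - ξt (k+2)) := by
      rw [hkey1]
      have : ξt (k+1) - ξ (k+1) n = -(ξ (k+1) n - ξt (k+1)) := by ring
      rw [this, hkey2]
      ring
    rw [hnum, mul_div_assoc, div_self (ne_of_gt hE), mul_one]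
    -- product inequality: ξ k n * ξ (k+1) n < ξt k * ξt (k+1)
    have hA : 0 < α k + ξ (k+1) n :=
      add_pos (hαpos k) (hpos (n - (k+1)) (k+1) n (by omega))
    have hB : 0 < α k + ξt (k+1) := add_pos (hαpos k) (hξtpos (k+1))
    have hP : ξ k n * ξ (k+1) n < ξt k * ξt (k+1) := by
      rw [hrec k n hk, hξtrec k, div_mul_eq_mul_div, div_mul_eq_mul_div,
        div_lt_div_iff₀ hA hB]
      nlinarith [mul_pos (mul_pos (hβpos k) (hαpos k)) (sub_pos.mpr hlt1)]
    have hpk : 0 < ξ k n := hpos (n - k) k n (by omega)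
    have hpk1 : 0 < ξ (k+1) n := hpos (n - (k+1)) (k+1) n (by omega)
    have e1 : (ξ k n * ξt k / β k) * (ξ (k+1) n * ξt (k+1) / β (k+1)) =
        (ξ k n * ξ (k+1) n) * (ξt k * ξt (k+1)) / (β k * β (k+1)) := by
      rw [div_mul_div_comm]
      congr 1
      ring
    have e2 : (ξt k ^ 2 / β k) * (ξt (k+1) ^ 2 / β (k+1)) =
        (ξt k * ξt (k+1)) * (ξt k * ξt (k+1)) / (β k * β (k+1)) := by
      rw [div_mul_div_comm]
      congr 1
      ring
    have hstep : (ξ k n * ξt k / β k) * (ξ (k+1) n * ξt (k+1) / β (k+1)) <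
        (ξt k ^ 2 / β k) * (ξt (k+1) ^ 2 / β (k+1)) := by
      rw [e1, e2]
      apply (div_lt_div_iff_of_pos_right (mul_pos (hβpos k) (hβpos (k+1)))).mpr
      exact mul_lt_mul_of_pos_right hP (mul_pos (hξtpos k) (hξtpos (k+1)))
    have hb1 : ξt k ^ 2 / β k < r := hk₂ k hkk
    have hb2 : ξt (k+1) ^ 2 / β (k+1) < r := hk₂ (k+1) (by omega)
    have : (ξt k ^ 2 / β k) * (ξt (k+1) ^ 2 / β (k+1)) < r ^ 2 := by
      rw [pow_two r]
      exact mul_lt_mul'' hb1 hb2 (div_pos (pow_pos (hξtpos k) 2) (hβpos k)).le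
        (div_pos (pow_pos (hξtpos (k+1)) 2) (hβpos (k+1))).le
    linarith
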